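/- arXiv:1702.06370 — 5 statements merged into one kernel-verified Lean document; each statement's English description precedes it below -/
import Mathlib

section
/- If a hypergraph H on a finite vertex set is connected (any two vertices joined by a path of hyperedges) and for every pair of vertices x, y the sets E(x), E(y) of hyperedges containing them satisfy E(x) ⊆ E(y) or E(y) ⊆ E(x) or E(x) ∩ E(y) = ∅, then any two hyperedges of H have nonempty intersection. -/
/-- The set of hyperedges of `H` that contain the vertex `x`. -/
def edgesOf {V : Type*} (H : Set (Set V)) (x : V) : Set (Set V) :=
  {e ∈ H | x ∈ e}

/-- Two vertices are adjacent in the hypergraph `H` if some hyperedge contains both. -/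
def hgAdj {V : Type*} (H : Set (Set V)) (x y : V) : Prop :=
  ∃ e ∈ H, x ∈ e ∧ y ∈ e

theorem stmt_0 {V : Type*} [Finite V] (H : Set (Set V)) (hfin : H.Finite)
    (hedge_ne : ∀ e ∈ H, e.Nonempty)
    (hconn : ∀ x y : V, Relation.ReflTransGen (hgAdj H) x y)
    (hhier : ∀ x y : V,
      edgesOf H x ⊆ edgesOf H y ∨ edgesOf H y ⊆ edgesOf H x ∨
        edgesOf H x ∩ edgesOf H y = ∅) :
    ∀ e₁ ∈ H, ∀ e₂ ∈ H, (e₁ ∩ e₂).Nonempty := by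
  intro e₁ he₁ e₂ he₂
  obtain ⟨x, hx⟩ := hedge_ne e₁ he₁
  obtain ⟨y, hy⟩ := hedge_ne e₂ he₂
  -- two vertices in a common edge have comparable edge sets
  have comp : ∀ a b : V, ∀ g ∈ H, a ∈ g → b ∈ g →
      edgesOf H a ⊆ edgesOf H b ∨ edgesOf H b ⊆ edgesOf H a := by
    intro a b g hg ha hb
    rcases hhier a b with h | h | h
    · exact Or.inl h
    · exact Or.inr h
    · exfalso
      have : g ∈ edgesOf H a ∩ edgesOf H b := ⟨⟨hg, ha⟩, ⟨hg, hb⟩⟩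
      rw [h] at this
      exact this
  -- every vertex reachable from x lies in an edge meeting e₁
  have key : ∀ z : V, Relation.ReflTransGen (hgAdj H) x z →
      ∃ g ∈ H, z ∈ g ∧ (g ∩ e₁).Nonempty := by
    intro z hz
    induction hz with
    | refl => exact ⟨e₁, he₁, hx, x, hx, hx⟩
    | @tail b c hab hstep ih =>
      obtain ⟨g, hg, hbg, x', hx'g, hx'e⟩ := ih
      obtain ⟨h, hh, hbh, hch⟩ := hstep
      rcases comp b x' g hg hbg hx'g with hsub | hsub
      · have hx'h : x' ∈ h := (hsub ⟨hh, hbh⟩).2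
        exact ⟨h, hh, hch, x', hx'h, hx'e⟩
      · have hbe : b ∈ e₁ := (hsub ⟨he₁, hx'e⟩).2
        exact ⟨h, hh, hch, b, hbh, hbe⟩
  obtain ⟨g, hg, hyg, x', hx'g, hx'e⟩ := key y (hconn x y)
  rcases comp y x' g hg hyg hx'g with hsub | hsub
  · have : x' ∈ e₂ := (hsub ⟨he₂, hy⟩).2
    exact ⟨x', hx'e, this⟩
  · have : y ∈ e₁ := (hsub ⟨he₁, hx'e⟩).2
    exact ⟨y, this, hy⟩
end

section
/- If a hypergraph H on a finite vertex set is connected, has at least one hyperedge, and for every pair of vertices x, y the sets E(x), E(y) of hyperedges containing them satisfy E(x) ⊆ E(y) or E(y) ⊆ E(x) or E(x) ∩ E(y) = ∅, then there exists a vertex that is contained in every hyperedge of H. -/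
theorem stmt_1 {V : Type*} [Finite V] (H : Set (Set V)) (hfin : H.Finite)
    (hne : H.Nonempty)
    (hedge_ne : ∀ e ∈ H, e.Nonempty)
    (hconn : ∀ x y : V, Relation.ReflTransGen (hgAdj H) x y)
    (hhier : ∀ x y : V,
      edgesOf H x ⊆ edgesOf H y ∨ edgesOf H y ⊆ edgesOf H x ∨
        edgesOf H x ∩ edgesOf H y = ∅) :
    ∃ v : V, ∀ e ∈ H, v ∈ e := by
  obtain ⟨e0, he0⟩ := hne
  obtain ⟨x0, -⟩ := hedge_ne e0 he0
  haveI : Nonempty V := ⟨x0⟩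
  have hEfin : ∀ x : V, (edgesOf H x).Finite := fun x =>
    hfin.subset (fun e he => he.1)
  obtain ⟨v, hv⟩ := Finite.exists_max (fun x : V => (edgesOf H x).ncard)
  -- every vertex's edge set is contained in edgesOf H v
  have key : ∀ y : V, edgesOf H y ⊆ edgesOf H v := by
    intro y
    have hpath := hconn v y
    induction hpath with
    | refl => exact subset_rfl
    | tail hpath hadj ih =>
      rename_i b c
      obtain ⟨e, heH, hbe, hce⟩ := hadj
      rcases hhier c v with h | h | h
      · exact h
      · have hle : (edgesOf H c).ncard ≤ (edgesOf H v).ncard := hv c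
        have := Set.eq_of_subset_of_ncard_le h hle (hEfin c)
        exact this.ge
      · exfalso
        have heb : e ∈ edgesOf H b := ⟨heH, hbe⟩
        have hev : e ∈ edgesOf H v := ih heb
        have hec : e ∈ edgesOf H c := ⟨heH, hce⟩
        exact absurd (Set.mem_inter hec hev) (by simp [h])
  refine ⟨v, fun e he => ?_⟩
  obtain ⟨w, hw⟩ := hedge_ne e he
  exact (key w ⟨he, hw⟩).2
end

section
/- Let H be a connected hierarchical hypergraph (i.e., for all vertices x,y: E(x) ⊆ E(y) or E(y) ⊆ E(x) or E(x) ∩ E(y) = ∅) and let F be a subset of vertices such that whenever E(x) ⊊ E(y) and x ∈ F then y ∈ F. If F is nonempty, then there exists a vertex v ∈ F that is contained in every hyperedge of H. -/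
theorem stmt_2 {V : Type*} [Finite V] (H : Set (Set V)) (hfin : H.Finite)
    (hne : H.Nonempty)
    (hedge_ne : ∀ e ∈ H, e.Nonempty)
    (hconn : ∀ x y : V, Relation.ReflTransGen (hgAdj H) x y)
    (hhier : ∀ x y : V,
      edgesOf H x ⊆ edgesOf H y ∨ edgesOf H y ⊆ edgesOf H x ∨
        edgesOf H x ∩ edgesOf H y = ∅)
    (F : Set V)
    (hF : ∀ x y : V, edgesOf H x ⊂ edgesOf H y → x ∈ F → y ∈ F)
    (hFne : F.Nonempty) :
    ∃ v ∈ F, ∀ e ∈ H, v ∈ e := by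
  -- pick v ∈ F with maximal edge set
  have hFfin : F.Finite := Set.toFinite F
  obtain ⟨v, hvF, hvmax⟩ :=
    Set.Finite.exists_maximalFor (edgesOf H) F hFfin hFne
  -- global maximality: no vertex has strictly larger edge set
  have hmax : ∀ y : V, ¬ edgesOf H v ⊂ edgesOf H y := by
    intro y hlt
    have hyF : y ∈ F := hF v y hlt hvF
    exact hlt.2 (hvmax hyF hlt.1)
  -- every reachable vertex has edge set contained in that of v
  have hreach : ∀ y : V, edgesOf H y ⊆ edgesOf H v := by
    intro y
    induction hconn v y with
    | refl => exact subset_rfl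
    | tail _ hadj ih =>
      rename_i b c _
      obtain ⟨f, hfH, hbf, hcf⟩ := hadj
      have hfv : f ∈ edgesOf H v := ih ⟨hfH, hbf⟩
      have hfc : f ∈ edgesOf H c := ⟨hfH, hcf⟩
      rcases hhier v c with h | h | h
      · rcases eq_or_lt_of_le (a := edgesOf H v) (b := edgesOf H c) h with heq | hlt
        · exact heq.symm.subset
        · exact absurd hlt (hmax c)
      · exact h
      · exact absurd (Set.mem_inter hfv hfc) (h ▸ not_false)
  refine ⟨v, hvF, fun e he => ?_⟩
  obtain ⟨w, hw⟩ := hedge_ne e he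
  exact (hreach w ⟨he, hw⟩).2
end

section
/- Every connected q-hierarchical hypergraph with a distinguished free set has a q-tree. Precisely: let H be a hypergraph on finite vertex set V with a finite set of hyperedges covering V, such that (i) for all x, y ∈ V, E(x) ⊆ E(y) or E(y) ⊆ E(x) or E(x) ∩ E(y) = ∅, and (ii) for a distinguished set F ⊆ V, if E(x) ⊊ E(y) and x ∈ F then y ∈ F; and suppose H is connected. Then there exists a rooted directed tree T on V such that every hyperedge of H equals path[v] for some vertex v (the set of vertices on the path from the root to v), and if F is nonempty then F is a connected subset of T containing the root. -/
/-- A rooted directed tree on vertex set `V`, given by a root, a parent function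
(the root is its own parent) and a depth function that decreases along parents. -/
structure DirRootedTree (V : Type*) where
  root : V
  parent : V → V
  depth : V → ℕ
  parent_root : parent root = root
  depth_root : depth root = 0
  depth_parent : ∀ v, v ≠ root → depth (parent v) + 1 = depth v

/-- The set of vertices on the path from the root to `v` (inclusive). -/
def DirRootedTree.pathSet {V : Type*} (T : DirRootedTree V) (v : V) : Set V :=
  {u | ∃ n : ℕ, T.parent^[n] v = u}

theorem stmt_4 {V : Type*} [Finite V] (H : Set (Set V)) (hfin : H.Finite)
    (hne : H.Nonempty)
    (hedge_ne : ∀ e ∈ H, e.Nonempty)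
    (hcover : ∀ v : V, ∃ e ∈ H, v ∈ e)
    (hconn : ∀ x y : V, Relation.ReflTransGen (hgAdj H) x y)
    (hhier : ∀ x y : V,
      edgesOf H x ⊆ edgesOf H y ∨ edgesOf H y ⊆ edgesOf H x ∨
        edgesOf H x ∩ edgesOf H y = ∅)
    (F : Set V)
    (hF : ∀ x y : V, edgesOf H x ⊂ edgesOf H y → x ∈ F → y ∈ F) :
    ∃ T : DirRootedTree V,
      (∀ e ∈ H, ∃ v : V, e = T.pathSet v) ∧
      (F.Nonempty → T.root ∈ F ∧ ∀ v ∈ F, T.pathSet v ⊆ F) := by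
  classical
  obtain ⟨e0, he0⟩ := hne
  obtain ⟨v0, hv0⟩ := hedge_ne e0 he0
  have hV : Nonempty V := ⟨v0⟩
  cases nonempty_fintype V
  set n := Fintype.card V with hn
  have hnpos : 0 < n := Fintype.card_pos
  -- tie-breaking injection, F-members first
  set ι : V → ℕ := fun x => (Fintype.equivFin V x : ℕ) + (if x ∈ F then 0 else n) with hι
  have hιlt : ∀ x, x ∈ F → ι x < n := by
    intro x hx; simp only [hι, hx, if_pos, add_zero]; exact (Fintype.equivFin V x).2
  have hιge : ∀ x, x ∉ F → n ≤ ι x := by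
    intro x hx; simp only [hι, hx, if_neg, not_false_iff]; omega
  have hιbound : ∀ x, ι x < 2 * n := by
    intro x; have := (Fintype.equivFin V x).2
    by_cases hx : x ∈ F <;> simp only [hι, hx, if_pos, if_neg, not_false_iff] <;> omega
  have hιinj : Function.Injective ι := by
    intro x y hxy
    have hx := (Fintype.equivFin V x).2
    have hy := (Fintype.equivFin V y).2
    have hval : (Fintype.equivFin V x : ℕ) = (Fintype.equivFin V y : ℕ) := by
      by_cases h1 : x ∈ F <;> by_cases h2 : y ∈ F <;>
        simp only [hι, h1, h2, if_pos, if_neg, not_false_iff] at hxy <;> omega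
    exact (Fintype.equivFin V).injective (Fin.val_injective hval)
  -- the finset of edges containing a vertex
  set EF : V → Finset (Set V) := fun u => hfin.toFinset.filter (fun e => u ∈ e) with hEFdef
  have hmemEF : ∀ u e, e ∈ EF u ↔ e ∈ H ∧ u ∈ e := by
    intro u e
    simp only [hEFdef, Finset.mem_filter, Set.Finite.mem_toFinset]
  have hEFcoe : ∀ u, (EF u : Set (Set V)) = edgesOf H u := by
    intro u; ext e; simp [hmemEF, edgesOf]
  have hsub : ∀ u w, EF u ⊆ EF w ↔ edgesOf H u ⊆ edgesOf H w := by
    intro u w; rw [← hEFcoe, ← hEFcoe, Finset.coe_subset]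
  have hssub : ∀ u w, EF u ⊂ EF w ↔ edgesOf H u ⊂ edgesOf H w := by
    intro u w; rw [← hEFcoe, ← hEFcoe, Finset.coe_ssubset]
  have hEFne : ∀ u, (EF u).Nonempty := by
    intro u; obtain ⟨e, he, hue⟩ := hcover u; exact ⟨e, (hmemEF u e).2 ⟨he, hue⟩⟩
  -- comparability
  have hcomp : ∀ u w : V, (EF u ∩ EF w).Nonempty → EF u ⊆ EF w ∨ EF w ⊆ EF u := by
    intro u w ⟨e, he⟩
    rcases hhier u w with h | h | h
    · exact Or.inl ((hsub u w).2 h)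
    · exact Or.inr ((hsub w u).2 h)
    · exfalso
      rw [Finset.mem_inter] at he
      have h1 : e ∈ edgesOf H u := by rw [← hEFcoe]; exact he.1
      have h2 : e ∈ edgesOf H w := by rw [← hEFcoe]; exact he.2
      have : e ∈ edgesOf H u ∩ edgesOf H w := ⟨h1, h2⟩
      rw [h] at this; exact this
  -- complement counting
  set cpl : V → ℕ := fun u => (hfin.toFinset.filter (fun e => ¬ u ∈ e)).card with hcpl
  have hcplcard : ∀ u, (EF u).card + cpl u = hfin.toFinset.card := by
    intro u; exact Finset.card_filter_add_card_filter_not _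
  have hcpl_eq : ∀ u w, EF u = EF w → cpl u = cpl w := by
    intro u w h
    have h1 := hcplcard u; have h2 := hcplcard w
    rw [h] at h1; omega
  have hcpl_lt : ∀ u w, EF w ⊂ EF u → cpl u < cpl w := by
    intro u w h
    have h1 := hcplcard u; have h2 := hcplcard w
    have := Finset.card_lt_card h
    omega
  set f : V → ℕ := fun u => 2 * n * cpl u + ι u with hf
  have hf_inj : Function.Injective f := by
    intro u w h
    simp only [hf] at h
    have hu := hιbound u; have hw := hιbound w
    have h1 : (2 * n * cpl u + ι u) % (2 * n) = (2 * n * cpl w + ι w) % (2 * n) := by rw [h]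
    rw [Nat.mul_add_mod, Nat.mul_add_mod, Nat.mod_eq_of_lt hu, Nat.mod_eq_of_lt hw] at h1
    exact hιinj h1
  -- ancestor relation
  set anc : V → V → Prop := fun u w => EF w ⊂ EF u ∨ (EF u = EF w ∧ ι u ≤ ι w) with hanc
  have hanc_refl : ∀ u, anc u u := fun u => Or.inr ⟨rfl, le_rfl⟩
  have hanc_f : ∀ u w, anc u w → f u ≤ f w := by
    intro u w h
    rcases h with h | ⟨h1, h2⟩
    · have hc : cpl u + 1 ≤ cpl w := hcpl_lt u w h
      have h3 : 2 * n * (cpl u + 1) ≤ 2 * n * cpl w := Nat.mul_le_mul_left _ hc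
      have h4 : 2 * n * cpl u + ι u < 2 * n * (cpl u + 1) := by
        have h5 : 2 * n * (cpl u + 1) = 2 * n * cpl u + 2 * n := by ring
        rw [h5]
        exact Nat.add_lt_add_left (hιbound u) _
      simp only [hf]
      exact le_of_lt (lt_of_lt_of_le h4 (le_trans h3 (Nat.le_add_right _ _)))
    · simp only [hf]; rw [hcpl_eq u w h1]
      exact Nat.add_le_add_left h2 _
  have hanc_antisymm : ∀ u w, anc u w → anc w u → u = w := by
    intro u w h1 h2
    exact hf_inj (le_antisymm (hanc_f u w h1) (hanc_f w u h2))
  have hanc_sub : ∀ u w, anc u w → EF w ⊆ EF u := by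
    intro u w h
    rcases h with h | ⟨h, _⟩
    · exact h.subset
    · intro x hx; rw [h]; exact hx
  have hanc_trans : ∀ u w x, anc u w → anc w x → anc u x := by
    intro u w x h1 h2
    rcases h1 with h1 | ⟨h1, h1'⟩ <;> rcases h2 with h2 | ⟨h2, h2'⟩
    · exact Or.inl (h2.trans h1)
    · exact Or.inl (by rw [← h2]; exact h1)
    · exact Or.inl (by rw [h1]; exact h2)
    · exact Or.inr ⟨h1.trans h2, h1'.trans h2'⟩
  have hanc_total : ∀ u w, EF u ⊆ EF w → anc w u ∨ anc u w := by
    intro u w h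
    rcases h.ssubset_or_eq with h | h
    · exact Or.inl (Or.inl h)
    · rcases le_total (ι u) (ι w) with h' | h'
      · exact Or.inr (Or.inr ⟨h, h'⟩)
      · exact Or.inl (Or.inr ⟨h.symm, h'⟩)
  -- comparable + f-ordered implies anc
  have hanc_of_f : ∀ u w, (EF u ⊆ EF w ∨ EF w ⊆ EF u) → f u ≤ f w → anc u w := by
    intro u w hc hfle
    have : anc w u ∨ anc u w := by
      rcases hc with h | h
      · exact hanc_total u w h
      · exact (hanc_total w u h).symm
    rcases this with h | h
    · have : u = w := hf_inj (le_antisymm hfle (hanc_f w u h))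
      exact this ▸ hanc_refl u
    · exact h
  -- the path finsets
  set P : V → Finset V := fun v => Finset.univ.filter (fun u => anc u v) with hP
  have hmemP : ∀ u v, u ∈ P v ↔ anc u v := by intro u v; simp [hP]
  have hself : ∀ v, v ∈ P v := fun v => (hmemP v v).2 (hanc_refl v)
  have hPcomp : ∀ v u w, u ∈ P v → w ∈ P v → anc u w ∨ anc w u := by
    intro v u w hu hw
    have hu' : EF v ⊆ EF u := hanc_sub u v ((hmemP u v).1 hu)
    have hw' : EF v ⊆ EF w := hanc_sub w v ((hmemP w v).1 hw)
    obtain ⟨e, he⟩ := hEFne v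
    have hcmp := hcomp u w ⟨e, Finset.mem_inter.2 ⟨hu' he, hw' he⟩⟩
    rcases le_total (f u) (f w) with h | h
    · exact Or.inl (hanc_of_f u w hcmp h)
    · exact Or.inr (hanc_of_f w u hcmp.symm h)
  -- every edge is a P v
  have hedgeP : ∀ e ∈ H, ∃ v, e = (P v : Set V) := by
    intro e he
    set s : Finset V := Finset.univ.filter (fun u => u ∈ e) with hs
    have hsne : s.Nonempty := by
      obtain ⟨x, hx⟩ := hedge_ne e he
      exact ⟨x, by simp [hs, hx]⟩
    obtain ⟨w, hw, hwmax⟩ := Finset.exists_max_image s f hsne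
    have hwe : w ∈ e := by simpa [hs] using hw
    refine ⟨w, ?_⟩
    ext u
    simp only [Finset.coe_filter, Set.mem_setOf_eq, hP, Finset.mem_univ, true_and]
    constructor
    · intro hu
      have h1 : e ∈ EF u := (hmemEF u e).2 ⟨he, hu⟩
      have h2 : e ∈ EF w := (hmemEF w e).2 ⟨he, hwe⟩
      have hcmp := hcomp u w ⟨e, Finset.mem_inter.2 ⟨h1, h2⟩⟩
      exact hanc_of_f u w hcmp (hwmax u (by simp [hs, hu]))
    · intro hu
      have h2 : e ∈ EF w := (hmemEF w e).2 ⟨he, hwe⟩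
      have := hanc_sub u w hu h2
      exact ((hmemEF u e).1 this).2
  -- the root
  obtain ⟨r, _, hrmin⟩ := Finset.exists_min_image Finset.univ f Finset.univ_nonempty
  have htop : ∀ v, EF v ⊆ EF r := by
    obtain ⟨m, _, hmmax⟩ := Finset.exists_max_image Finset.univ (fun v => (EF v).card)
      Finset.univ_nonempty
    have hEm : ∀ v, EF v ⊆ EF m := by
      intro v
      have h := hconn m v
      induction h with
      | refl => exact subset_rfl
      | @tail b c hab hbc ih =>
        obtain ⟨e, heH, hbe, hce⟩ := hbc
        have h1 : e ∈ EF b := (hmemEF b e).2 ⟨heH, hbe⟩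
        have h2 : e ∈ EF m := ih h1
        have h3 : e ∈ EF c := (hmemEF c e).2 ⟨heH, hce⟩
        rcases hcomp m c ⟨e, Finset.mem_inter.2 ⟨h2, h3⟩⟩ with h | h
        · exact (Finset.eq_of_subset_of_card_le h (hmmax c (Finset.mem_univ c))).ge
        · exact h
    intro v
    have h1 : EF r ⊆ EF m := hEm r
    have h2 : anc r m := hanc_of_f r m (Or.inl h1) (hrmin m (Finset.mem_univ m))
    rcases h2 with h2 | ⟨h2, _⟩
    · exact absurd h1 h2.not_subset
    · rw [h2]; exact hEm v
  have hanc_r : ∀ v, anc r v := by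
    intro v
    rcases hanc_total v r (htop v) with h | h
    · exact h
    · have := hanc_antisymm v r h (hanc_of_f r v (Or.inr (htop v)) (hrmin v (Finset.mem_univ v)))
      exact this ▸ hanc_refl v
  have hProot : P r = {r} := by
    ext u
    simp only [Finset.mem_singleton, hmemP]
    constructor
    · intro h
      exact hanc_antisymm u r h (hanc_r u)
    · rintro rfl; exact hanc_refl u
  have hrmem : ∀ v, r ∈ P v := fun v => (hmemP r v).2 (hanc_r v)
  have herase_ne : ∀ v, v ≠ r → ((P v).erase v).Nonempty := by
    intro v hv
    exact ⟨r, Finset.mem_erase.2 ⟨fun h => hv h.symm, hrmem v⟩⟩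
  -- the parent function
  set par : V → V := fun v =>
    if h : ((P v).erase v).Nonempty then
      Classical.choose (Finset.exists_max_image ((P v).erase v) f h) else v with hpar
  have hPpar : ∀ v, v ≠ r → par v ∈ (P v).erase v ∧ P (par v) = (P v).erase v := by
    intro v hv
    have h := herase_ne v hv
    have hpv : par v = Classical.choose (Finset.exists_max_image ((P v).erase v) f h) := by
      simp only [hpar, dif_pos h]
    obtain ⟨hmem, hmax⟩ := Classical.choose_spec (Finset.exists_max_image ((P v).erase v) f h)
    rw [← hpv] at hmem hmax
    refine ⟨hmem, ?_⟩
    have hmem' := Finset.mem_erase.1 hmem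
    have hancpv : anc (par v) v := (hmemP (par v) v).1 hmem'.2
    ext w
    rw [hmemP, Finset.mem_erase, hmemP]
    constructor
    · intro hw
      refine ⟨fun hwv => ?_, hanc_trans w (par v) v hw hancpv⟩
      rw [hwv] at hw
      exact hmem'.1 (hanc_antisymm (par v) v hancpv hw)
    · rintro ⟨hwv, hw⟩
      rcases hPcomp v w (par v) ((hmemP w v).2 hw) hmem'.2 with h' | h'
      · exact h'
      · have : par v = w := hf_inj (le_antisymm (hanc_f (par v) w h')
          (hmax w (Finset.mem_erase.2 ⟨hwv, (hmemP w v).2 hw⟩)))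
        exact this ▸ hanc_refl w
  have hpar_root : par r = r := by
    have : ((P r).erase r) = ∅ := by rw [hProot]; simp
    simp only [hpar, this]
    simp
  -- cardinality facts
  have hcard2 : ∀ v, v ≠ r → 2 ≤ (P v).card := by
    intro v hv
    have h1 := Finset.card_erase_of_mem (hself v)
    have h2 := Finset.card_pos.2 (herase_ne v hv)
    omega
  -- iterates of par stay in P
  have hiter : ∀ (m : ℕ) (v : V), par^[m] v ∈ P v := by
    intro m
    induction m with
    | zero => intro v; exact hself v
    | succ k ih =>
      intro v
      rw [Function.iterate_succ_apply]
      by_cases hv : v = r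
      · rw [hv, hpar_root]
        exact ih r
      · have h := (hPpar v hv).2
        have := ih (par v)
        rw [h] at this
        exact Finset.mem_of_mem_erase this
  -- every element of P v is an iterate
  have hsur : ∀ (k : ℕ) (v : V), (P v).card ≤ k → ∀ u ∈ P v, ∃ m : ℕ, par^[m] v = u := by
    intro k
    induction k with
    | zero =>
      intro v hv u hu
      exact absurd (Finset.card_pos.2 ⟨v, hself v⟩) (by omega)
    | succ k ih =>
      intro v hv u hu
      by_cases huv : u = v
      · exact ⟨0, huv.symm⟩
      by_cases hvr : v = r
      · exfalso
        subst hvr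
        rw [hProot, Finset.mem_singleton] at hu
        exact huv hu
      have hpp := (hPpar v hvr).2
      have hu' : u ∈ P (par v) := by
        rw [hpp]
        exact Finset.mem_erase.2 ⟨huv, hu⟩
      have hc1 := Finset.card_erase_of_mem (hself v)
      have hcard : (P (par v)).card ≤ k := by
        rw [hpp, hc1]
        have := Finset.card_pos.2 ⟨v, hself v⟩
        omega
      obtain ⟨m, hm⟩ := ih (par v) hcard u hu'
      exact ⟨m + 1, by rw [Function.iterate_succ_apply]; exact hm⟩
  have hpath : ∀ v : V, {u | ∃ m : ℕ, par^[m] v = u} = (P v : Set V) := by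
    intro v
    ext u
    simp only [Set.mem_setOf_eq, Finset.mem_coe]
    constructor
    · rintro ⟨m, rfl⟩
      exact hiter m v
    · intro hu
      exact hsur (P v).card v le_rfl u hu
  -- F-goodness of anc
  have hancF : ∀ u v, anc u v → v ∈ F → u ∈ F := by
    intro u v h hv
    rcases h with h | ⟨h1, h2⟩
    · exact hF v u ((hssub v u).1 h) hv
    · by_contra hu
      exact absurd (lt_of_lt_of_le (hιlt v hv) (hιge u hu)) (not_lt.2 h2)
  -- build the tree
  refine ⟨⟨r, par, fun v => (P v).card - 1, hpar_root, by show (P r).card - 1 = 0; rw [hProot]; simp, ?_⟩, ?_, ?_⟩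
  · -- depth_parent
    intro v hv
    show (P (par v)).card - 1 + 1 = (P v).card - 1
    have h := (hPpar v hv).2
    have h1 := Finset.card_erase_of_mem (hself v)
    have h2 := hcard2 v hv
    rw [h, h1]
    omega
  · -- edges are path sets
    intro e he
    obtain ⟨v, hv⟩ := hedgeP e he
    exact ⟨v, by rw [hv, DirRootedTree.pathSet]; exact (hpath v).symm⟩
  · -- F conditions
    intro hFne
    obtain ⟨x, hx⟩ := hFne
    constructor
    · exact hancF r x (hanc_r x) hx
    · intro v hv u hu
      rw [DirRootedTree.pathSet, Set.mem_setOf_eq] at hu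
      obtain ⟨m, rfl⟩ := hu
      exact hancF _ v ((hmemP _ v).1 (hiter m v)) hv
end

section
/- For the query φ(x,y) := (E x x ∧ E x y ∧ E y y) on a directed graph D: encoding a Boolean matrix M on a bipartite vertex set {a_1,...,a_n} ∪ {b_1,...,b_n} via edges (a_i, b_j) for M_{i,j} = 1, loops (a_i,a_i) for u_i = 1, and loops (b_j,b_j) for v_j = 1, the query result φ(D) contains a pair of the form (a_i, b_j) if and only if u^T M v = 1 over the Boolean semiring; moreover all pairs in φ(D) not of this form are among the at most 2n loop pairs (c,c) with (c,c) ∈ E. -/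
/-- The result of the query `φ(x,y) = E x x ∧ E x y ∧ E y y` on the graph `E`. -/
def phi1 {V : Type*} (E : Set (V × V)) : Set (V × V) :=
  {p | (p.1, p.1) ∈ E ∧ p ∈ E ∧ (p.2, p.2) ∈ E}

/-- The bipartite encoding of a Boolean matrix `M` and vectors `u`, `v`:
edges `(aᵢ, bⱼ)` for `M i j = 1`, loops on `aᵢ` for `u i = 1`, and loops on
`bⱼ` for `v j = 1`, where `aᵢ = inl i` and `bⱼ = inr j`. -/
def bipE (n : ℕ) (M : Fin n → Fin n → Bool) (u v : Fin n → Bool) :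
    Set ((Fin n ⊕ Fin n) × (Fin n ⊕ Fin n)) :=
  {p | (∃ i j, M i j = true ∧ p = (Sum.inl i, Sum.inr j)) ∨
       (∃ i, u i = true ∧ p = (Sum.inl i, Sum.inl i)) ∨
       (∃ j, v j = true ∧ p = (Sum.inr j, Sum.inr j))}

theorem stmt_16 (n : ℕ) (M : Fin n → Fin n → Bool) (u v : Fin n → Bool) :
    ((∃ i j : Fin n,
        ((Sum.inl i, Sum.inr j) : (Fin n ⊕ Fin n) × (Fin n ⊕ Fin n))
          ∈ phi1 (bipE n M u v))
      ↔ ∃ i j : Fin n, u i = true ∧ M i j = true ∧ v j = true) ∧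
    (∀ p ∈ phi1 (bipE n M u v),
      (∀ i j : Fin n, p ≠ (Sum.inl i, Sum.inr j)) →
        p.1 = p.2 ∧ (p.1, p.1) ∈ bipE n M u v) ∧
    {p ∈ phi1 (bipE n M u v) | p.1 = p.2}.ncard ≤ 2 * n := by
  refine ⟨?_, ?_, ?_⟩
  · constructor
    · rintro ⟨i, j, h1, h2, h3⟩
      refine ⟨i, j, ?_, ?_, ?_⟩
      · rcases h1 with ⟨i', j', _, h⟩ | ⟨i', hu, h⟩ | ⟨j', _, h⟩ <;>
          simp_all [Prod.ext_iff]
      · rcases h2 with ⟨i', j', hm, h⟩ | ⟨i', _, h⟩ | ⟨j', _, h⟩ <;>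
          simp_all [Prod.ext_iff]
      · rcases h3 with ⟨i', j', _, h⟩ | ⟨i', _, h⟩ | ⟨j', hv, h⟩ <;>
          simp_all [Prod.ext_iff]
    · rintro ⟨i, j, hu, hm, hv⟩
      exact ⟨i, j, Or.inr (Or.inl ⟨i, hu, rfl⟩), Or.inl ⟨i, j, hm, rfl⟩,
        Or.inr (Or.inr ⟨j, hv, rfl⟩)⟩
  · rintro p ⟨h1, h2, h3⟩ hne
    rcases h2 with ⟨i, j, _, h⟩ | ⟨i, _, h⟩ | ⟨j, _, h⟩
    · exact absurd h (hne i j)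
    · subst h; exact ⟨rfl, h1⟩
    · subst h; exact ⟨rfl, h1⟩
  · have hsub : {p ∈ phi1 (bipE n M u v) | p.1 = p.2} ⊆
        Set.range (fun x : Fin n ⊕ Fin n => (x, x)) := by
      rintro ⟨x, y⟩ ⟨_, h⟩
      exact ⟨x, by simp_all⟩
    calc {p ∈ phi1 (bipE n M u v) | p.1 = p.2}.ncard
        ≤ (Set.range (fun x : Fin n ⊕ Fin n => (x, x))).ncard :=
          Set.ncard_le_ncard hsub (Set.finite_range _)
      _ = 2 * n := by
          have : (Set.range fun x : Fin n ⊕ Fin n => (x, x)) =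
              (fun x : Fin n ⊕ Fin n => (x, x)) '' Set.univ := by
            rw [Set.image_univ]
          rw [this, Set.ncard_image_of_injective _ (fun a b h => by simpa using h),
            Set.ncard_univ]
          simp [Nat.card_eq_fintype_card, two_mul]
end
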